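/- For every m ≤ d, S_AS^m ⊆ AN_Y, i.e., the union of all minimally invariant sets of cardinality at most m consists only of ancestors of Y. -/

import Mathlib

/-- Nodes of the graph: the environment node `E`, predictor nodes `V j` for
`j ∈ {1, …, d}` (represented by `Fin d`), and the response node `Y`. -/
inductive Node (d : ℕ) : Type where
  | E : Node d
  | V : Fin d → Node d
  | Y : Node d
deriving DecidableEq

/-- A directed acyclic graph on `{E} ∪ {1, …, d} ∪ {Y}` in which `E` has no
parents (`E` is exogenous). -/
structure CGraph (d : ℕ) where
  adj : Node d → Node d → Prop
  acyclic : ∀ v, ¬ Relation.TransGen adj v v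
  exogenous : ∀ v, ¬ adj v Node.E

namespace CGraph

variable {d : ℕ} (G : CGraph d)

/-- Undirected adjacency: an edge between `u` and `v` in either direction. -/
def Edge (u v : Node d) : Prop := G.adj u v ∨ G.adj v u

/-- `p` is a path between `a` and `b`: a duplicate-free list of nodes starting
at `a`, ending at `b`, with consecutive nodes adjacent (in either direction). -/
def IsPath (p : List (Node d)) (a b : Node d) : Prop :=
  p.head? = some a ∧ p.getLast? = some b ∧ p.Nodup ∧ p.Chain' G.Edge

/-- `x` is a (strict) descendant of `v`. -/
def Desc (v x : Node d) : Prop := Relation.TransGen G.adj v x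

/-- The consecutive triple `u, m, w` on a path blocks the path given `C`:
either `m` is a non-collider lying in `C`, or `m` is a collider such that
neither `m` nor any of its descendants lies in `C`. -/
def BlockedAt (C : Set (Node d)) (u m w : Node d) : Prop :=
  (¬ (G.adj u m ∧ G.adj w m) ∧ m ∈ C) ∨
  ((G.adj u m ∧ G.adj w m) ∧ m ∉ C ∧ ∀ x, G.Desc m x → x ∉ C)

/-- A path `p` is blocked by `C` if some consecutive triple on it blocks it. -/
def Blocked (C : Set (Node d)) (p : List (Node d)) : Prop :=
  ∃ q u m w r, p = q ++ u :: m :: w :: r ∧ G.BlockedAt C u m w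

/-- `a` and `b` are d-separated given `C`: every path between them is blocked. -/
def DSep (a b : Node d) (C : Set (Node d)) : Prop :=
  ∀ p, G.IsPath p a b → G.Blocked C p

/-- `S ⊆ {1, …, d}` is invariant if `E` and `Y` are d-separated given `S`. -/
def Invariant (S : Set (Fin d)) : Prop := G.DSep Node.E Node.Y (Node.V '' S)

/-- `S` is minimally invariant if it is invariant and no strict subset of `S`
is invariant. -/
def MinInvariant (S : Set (Fin d)) : Prop :=
  G.Invariant S ∧ ∀ S', S' ⊂ S → ¬ G.Invariant S'

/-- `S_AS`: the union of all minimally invariant sets. -/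
def SAS : Set (Fin d) := ⋃₀ {S | G.MinInvariant S}

/-- `S_ICP`: the intersection of all invariant sets (`∅` if there are none). -/
def SICP : Set (Fin d) :=
  {j | (∃ S, G.Invariant S) ∧ ∀ S, G.Invariant S → j ∈ S}

/-- `S_AS^m`: the union of all minimally invariant sets of cardinality `≤ m`. -/
def SASm (m : ℕ) : Set (Fin d) := ⋃₀ {S | G.MinInvariant S ∧ S.ncard ≤ m}

/-- The parents of `Y` among `{1, …, d}`. -/
def paY : Set (Fin d) := {j | G.adj (Node.V j) Node.Y}

/-- The children of `E` among `{1, …, d}`. -/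
def chE : Set (Fin d) := {j | G.adj Node.E (Node.V j)}

/-- The ancestors of `Y` among `{1, …, d}`. -/
def anY : Set (Fin d) := {j | Relation.TransGen G.adj (Node.V j) Node.Y}

/-- `PA(A)`: the union of the parent sets of the elements of `A ⊆ {1, …, d}`. -/
def paOf (A : Set (Fin d)) : Set (Fin d) := {j | ∃ i ∈ A, G.adj (Node.V j) (Node.V i)}

end CGraph


section SASproofAux

private lemma chain_transGen {α : Type*} {r : α → α → Prop} :
    ∀ (l : List α) (a b : α), List.Chain r a l → l.getLast? = some b →
      Relation.TransGen r a b := by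
  intro l
  induction l with
  | nil => intro a b _ h; simp at h
  | cons c l' ih =>
    intro a b hch hl
    replace hch : r a c ∧ List.Chain r c l' := List.isChain_cons_cons.mp hch
    cases l' with
    | nil =>
      simp at hl; subst hl; exact Relation.TransGen.single hch.1
    | cons e l'' =>
      exact Relation.TransGen.head hch.1 (ih c b hch.2 (by simpa using hl))

namespace CGraph

variable {d : ℕ} (G : CGraph d)

private lemma turn :
    ∀ (l : List (Node d)) (m w : Node d), List.Chain' G.Edge (m :: w :: l) → G.adj m w →
      List.Chain G.adj m (w :: l) ∨
      ∃ q x c y r, m :: w :: l = q ++ x :: c :: y :: r ∧ G.adj x c ∧ G.adj y c ∧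
        Relation.TransGen G.adj m c := by
  intro l
  induction l with
  | nil =>
    intro m w _ h
    left; exact List.Chain.cons h List.Chain.nil
  | cons z l' ih =>
    intro m w hch hmw
    have hch' : List.Chain' G.Edge (w :: z :: l') := hch.tail
    have hwz : G.Edge w z := (List.isChain_cons_cons.mp hch').1
    rcases hwz with hwz | hzw
    · rcases ih w z hch' hwz with h | ⟨q, x, c, y, r, heq, hx, hy, htg⟩
      · left; exact List.Chain.cons hmw h
      · right
        refine ⟨m :: q, x, c, y, r, ?_, hx, hy, Relation.TransGen.head hmw htg⟩
        rw [List.cons_append, ← heq]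
    · right
      exact ⟨[], m, w, z, l', rfl, hmw, hzw, Relation.TransGen.single hmw⟩

private lemma not_transGen_E {a : Node d} : ¬ Relation.TransGen G.adj a Node.E := by
  intro h
  cases h with
  | single h => exact G.exogenous _ h
  | tail _ h => exact G.exogenous _ h

private lemma invariant_inter_anY {S : Set (Fin d)} (h : G.Invariant S) :
    G.Invariant (S ∩ G.anY) := by
  intro p hp
  obtain ⟨q, u, m, w, r, hdec, hb⟩ := h p hp
  set C' : Set (Node d) := Node.V '' (S ∩ G.anY) with hC'
  have hmono : C' ⊆ Node.V '' S := fun x ⟨y, hy, e⟩ => ⟨y, hy.1, e⟩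
  rcases hb with ⟨hnc, hmC⟩ | ⟨hcol, hm1, hm2⟩
  swap
  · exact ⟨q, u, m, w, r, hdec,
      Or.inr ⟨hcol, fun hc => hm1 (hmono hc), fun x hdx hc => hm2 x hdx (hmono hc)⟩⟩
  obtain ⟨j, hjS, rfl⟩ := hmC
  by_cases hj : j ∈ G.anY
  · exact ⟨q, u, _, w, r, hdec, Or.inl ⟨hnc, ⟨j, ⟨hjS, hj⟩, rfl⟩⟩⟩
  have hchain : List.Chain' G.Edge p := hp.2.2.2
  have key : ∀ (x c y : Node d) (q' r' : List (Node d)),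
      p = q' ++ x :: c :: y :: r' → G.adj x c → G.adj y c →
      Relation.TransGen G.adj (Node.V j) c → G.Blocked C' p := by
    intro x c y q' r' hdec' hx hy htg
    refine ⟨q', x, c, y, r', hdec', Or.inr ⟨⟨hx, hy⟩, ?_, ?_⟩⟩
    · rintro ⟨k, ⟨-, hkan⟩, rfl⟩
      exact hj (htg.trans hkan)
    · rintro x' hdx ⟨k, ⟨-, hkan⟩, rfl⟩
      exact hj ((htg.trans hdx).trans hkan)
  -- edges around the triple
  have htri : List.Chain' G.Edge [u, Node.V j, w] :=
    hchain.infix ⟨q, r, by rw [hdec]; simp⟩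
  have hum : G.Edge u (Node.V j) := (List.isChain_cons_cons.mp htri).1
  have hmw : G.Edge (Node.V j) w := (List.isChain_cons_cons.mp (List.isChain_cons_cons.mp htri).2).1
  by_cases hfwd : G.adj (Node.V j) w
  · -- follow the path towards Y
    have hsuf : List.Chain' G.Edge (Node.V j :: w :: r) :=
      hchain.infix ⟨q ++ [u], [], by rw [hdec]; simp⟩
    have hlast : (Node.V j :: w :: r).getLast? = some Node.Y := by
      have hY := hp.2.1
      rw [hdec, show q ++ u :: Node.V j :: w :: r = (q ++ [u]) ++ (Node.V j :: w :: r) by simp,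
        List.getLast?_append] at hY
      obtain ⟨z, hz⟩ := Option.isSome_iff_exists.mp
        (List.getLast?_isSome.mpr (by simp : (Node.V j :: w :: r) ≠ []))
      rw [hz] at hY
      simp only [Option.or] at hY
      rw [hz, hY]
    rcases G.turn r (Node.V j) w hsuf hfwd with hall | ⟨q', x, c, y, r', heq, hx, hy, htg⟩
    · exact absurd (chain_transGen _ _ _ hall (by simpa using hlast)) hj
    · refine key x c y (q ++ u :: q') r' ?_ hx hy htg
      rw [hdec, show q ++ u :: Node.V j :: w :: r = (q ++ [u]) ++ (Node.V j :: w :: r) by simp,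
        heq]
      simp
  · -- then the edge towards E is out of V j
    have hbwd : G.adj (Node.V j) u := by
      rcases hmw with h1 | h1
      · exact absurd h1 hfwd
      rcases hum with h2 | h2
      · exact absurd ⟨h2, h1⟩ hnc
      · exact h2
    have hpre : List.Chain' G.Edge (q ++ [u, Node.V j]) :=
      hchain.infix ⟨[], w :: r, by rw [hdec]; simp⟩
    have hrev : List.Chain' G.Edge (Node.V j :: u :: q.reverse) := by
      have h1 : List.Chain' (flip G.Edge) (q ++ [u, Node.V j]).reverse :=
        (List.isChain_reverse).mpr hpre
      have h2 : List.Chain' G.Edge (q ++ [u, Node.V j]).reverse :=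
        h1.imp (fun a b hab => hab.symm)
      simpa using h2
    have hlastE : (Node.V j :: u :: q.reverse).getLast? = some Node.E := by
      have hh := hp.1
      rw [hdec] at hh
      have : (q ++ [u, Node.V j]).head? = some Node.E := by
        rw [show q ++ u :: Node.V j :: w :: r = (q ++ [u, Node.V j]) ++ (w :: r) by simp,
          List.head?_append_of_ne_nil] at hh
        · exact hh
        · simp
      rw [show (Node.V j :: u :: q.reverse) = (q ++ [u, Node.V j]).reverse by simp]
      rwa [List.getLast?_reverse]
    rcases G.turn q.reverse (Node.V j) u hrev hbwd with hall | ⟨q', x, c, y, r', heq, hx, hy, htg⟩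
    · exact absurd (chain_transGen _ _ _ hall (by simpa using hlastE)) (G.not_transGen_E)
    · refine key y c x r'.reverse (q'.reverse ++ w :: r) ?_ hy hx htg
      have h2 : q ++ [u, Node.V j] = r'.reverse ++ y :: c :: x :: q'.reverse := by
        have := congrArg List.reverse heq
        simpa using this
      rw [hdec, show q ++ u :: Node.V j :: w :: r = (q ++ [u, Node.V j]) ++ (w :: r) by simp,
        h2]
      simp

private lemma minInvariant_subset_anY {S : Set (Fin d)} (hS : G.MinInvariant S) :
    S ⊆ G.anY := by
  have h1 := G.invariant_inter_anY hS.1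
  have heq : S ∩ G.anY = S := by
    by_contra hne
    exact hS.2 _ (Set.ssubset_iff_subset_ne.mpr ⟨Set.inter_subset_left, hne⟩) h1
  rw [← heq]
  exact Set.inter_subset_right

end CGraph

end SASproofAux

/-- for every `m ≤ d`, `S_AS^m ⊆ AN_Y`: the union of all
minimally invariant sets of cardinality at most `m` consists only of
ancestors of `Y`. -/
theorem SASm_subset_ancestors {d : ℕ} (G : CGraph d) (m : ℕ) (hm : m ≤ d) :
    G.SASm m ⊆ G.anY := by
  intro j hj
  obtain ⟨S, ⟨hmin, -⟩, hjS⟩ := hj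
  exact G.minInvariant_subset_anY hmin hjS
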